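/- Let q = p^f, m ≥ 2, and let H_0 be the set of elements x̄ ∈ F_{q^m}*/F_q* such that Tr_{q^m/q}(x) = 0 for a representative x of x̄ with Tr_{q^m/q}(x) ∈ {0,1}. Then for any nontrivial multiplicative character χ of F_{q^m} whose order divides (q^m−1)/(q−1) (viewed as a character of F_{q^m}*/F_q*), χ(H_0) := Σ_{h∈H_0} χ(h) = G_{q^m}(χ)/q. -/

import Mathlib

open Finset

/-- The canonical additive character `ψ(x) = ζ_p ^ Tr(x)` of a finite field of
characteristic `p`. -/
noncomputable def stdAddChar (p : ℕ) (F : Type) [Field F] [Fintype F] [Algebra (ZMod p) F]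
    (x : F) : ℂ :=
  Complex.exp (2 * Real.pi * Complex.I * ((Algebra.trace (ZMod p) F x).val : ℂ) / (p : ℂ))

/-- The Gauss sum `G_q(χ) = ∑_{x ∈ F_q*} χ(x) ψ(x)` of a multiplicative character `χ`
with respect to the canonical additive character.  (Note `χ 0 = 0` for a `MulChar`.) -/
noncomputable def gaussSum' (p : ℕ) (F : Type) [Field F] [Fintype F] [Algebra (ZMod p) F]
    (χ : MulChar F ℂ) : ℂ :=
  ∑ x : F, χ x * stdAddChar p F x

private lemma exp_mod_aux (p : ℕ) (hp : (p : ℂ) ≠ 0) (a : ℕ) :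
    Complex.exp (2 * Real.pi * Complex.I * ((a % p : ℕ) : ℂ) / p) =
      Complex.exp (2 * Real.pi * Complex.I * (a : ℂ) / p) := by
  conv_rhs => rw [← Nat.div_add_mod a p]
  rw [show (2 * Real.pi * Complex.I * ((p * (a / p) + a % p : ℕ) : ℂ) / p)
      = ((a / p : ℕ) : ℂ) * (2 * Real.pi * Complex.I)
        + 2 * Real.pi * Complex.I * ((a % p : ℕ) : ℂ) / p by
    push_cast
    field_simp]
  rw [Complex.exp_add, Complex.exp_nat_mul_two_pi_mul_I, one_mul]

open Classical in
/-- Character values of the Singer difference set: `H₀` is the set of classes in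
`F_{q^m}*/F_q*` with a trace-zero representative.  For a nontrivial multiplicative
character `χ` of `F_{q^m}` of order dividing `(q^m−1)/(q−1)`, `χ(H₀) = G_{q^m}(χ)/q`.
Since `χ` is constant on cosets of `F_q*` and each class of `H₀` consists of `q − 1`
trace-zero field elements, `χ(H₀) = (q−1)⁻¹ ∑_{x ≠ 0, Tr(x)=0} χ(x)`. -/
theorem singer_character_value (p : ℕ) [Fact p.Prime]
    (F : Type) [Field F] [Fintype F]
    (E : Type) [Field E] [Fintype E] [Algebra (ZMod p) E] [Algebra F E]
    (m : ℕ) (hm : 2 ≤ m) (hcard : Fintype.card E = Fintype.card F ^ m)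
    (χ : MulChar E ℂ) (hχ : χ ≠ 1)
    (hord : orderOf χ ∣ (Fintype.card E - 1) / (Fintype.card F - 1)) :
    ((Fintype.card F : ℂ) - 1)⁻¹ *
        ∑ x ∈ univ.filter (fun x : E => x ≠ 0 ∧ Algebra.trace F E x = 0), χ x =
      gaussSum' p E χ / (Fintype.card F : ℂ) := by
  classical
  have hp : p.Prime := Fact.out
  haveI : NeZero p := ⟨hp.ne_zero⟩
  haveI : CharP E p := charP_of_injective_algebraMap (algebraMap (ZMod p) E).injective p
  haveI : CharP F p := (algebraMap F E).charP (algebraMap F E).injective p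
  letI : Algebra (ZMod p) F := ZMod.algebra F p
  haveI : IsScalarTower (ZMod p) F E := IsScalarTower.of_algebraMap_eq' (RingHom.ext_zmod _ _)
  haveI : FiniteDimensional (ZMod p) F := Module.Finite.of_finite
  haveI : Module.Finite F E := Module.Finite.of_finite
  set q := Fintype.card F with hq
  set Q := Fintype.card E with hQ
  have hq2 : 2 ≤ q := Fintype.one_lt_card
  have hQ2 : 2 ≤ Q := Fintype.one_lt_card
  have hq0 : q ≠ 0 := by omega
  have hqC : (q : ℂ) ≠ 0 := (Nat.cast_ne_zero (R := ℂ)).mpr hq0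
  have hq1C : (q : ℂ) - 1 ≠ 0 := by
    intro h
    exact absurd (Nat.cast_eq_one.mp (sub_eq_zero.mp h)) (by omega)
  have hpC : (p : ℂ) ≠ 0 := (Nat.cast_ne_zero (R := ℂ)).mpr hp.ne_zero
  have hdvd : q - 1 ∣ Q - 1 := by
    rw [hcard]; simpa using Nat.sub_dvd_pow_sub_pow q 1 m
  set N := (Q - 1) / (q - 1) with hN
  have hNmul : (q - 1) * N = Q - 1 := Nat.mul_div_cancel' hdvd
  have hNpos : 0 < N := by
    rcases Nat.eq_zero_or_pos N with h | h
    · rw [h, mul_zero] at hNmul; omega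
    · exact h
  -- χ is trivial on the image of F*
  have hχF : ∀ a : F, a ≠ 0 → χ (algebraMap F E a) = 1 := by
    intro a ha
    have hu : algebraMap F E a ≠ 0 := by
      simpa using (map_ne_zero (algebraMap F E)).mpr ha
    set u : Eˣ := Units.mk0 _ hu with hudef
    obtain ⟨g, hg⟩ := IsCyclic.exists_generator (α := Eˣ)
    obtain ⟨k, hk⟩ := (Submonoid.mem_powers_iff _ _).mp
      ((mem_powers_iff_mem_zpowers).mpr (hg u))
    have hord_g : orderOf g = Q - 1 := by
      rw [orderOf_eq_card_of_forall_mem_zpowers hg, Nat.card_eq_fintype_card, Fintype.card_units, hQ]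
    have hupow : u ^ (q - 1) = 1 := by
      have hE : (algebraMap F E a) ^ (q - 1) = 1 := by
        rw [← map_pow, FiniteField.pow_card_sub_one_eq_one a ha, map_one]
      ext
      simpa [hudef] using hE
    have hgk : g ^ (k * (q - 1)) = 1 := by rw [pow_mul, hk, hupow]
    have hdvd2 : (q - 1) * N ∣ (q - 1) * k := by
      rw [hNmul]
      rw [← hord_g]
      simpa [mul_comm] using orderOf_dvd_of_pow_eq_one hgk
    have hNk : N ∣ k := (Nat.mul_dvd_mul_iff_left (by omega : 0 < q - 1)).mp hdvd2
    obtain ⟨j, hj⟩ := hNk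
    have hχN : χ ^ N = 1 := orderOf_dvd_iff_pow_eq_one.mp hord
    have huval : algebraMap F E a = ((g ^ j : Eˣ) : E) ^ N := by
      have : u = (g ^ j) ^ N := by
        rw [← hk, hj, ← pow_mul, mul_comm]
      calc algebraMap F E a = (u : E) := rfl
        _ = (((g ^ j) ^ N : Eˣ) : E) := by rw [this]
        _ = ((g ^ j : Eˣ) : E) ^ N := by push_cast; ring
    rw [huval, map_pow, ← MulChar.pow_apply' χ hNpos.ne' , hχN,
      MulChar.one_apply (((g ^ j : Eˣ)).isUnit)]
  -- fiberwise setup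
  set T : E → F := fun x => Algebra.trace F E x with hT
  set S : F → ℂ := fun t => ∑ x ∈ univ.filter (fun x : E => T x = t), χ x with hS
  set φ : F → ℂ := fun t =>
    Complex.exp (2 * Real.pi * Complex.I * ((Algebra.trace (ZMod p) F t).val : ℂ) / p)
    with hφ
  -- the Gauss sum, fiberwise
  have hG : gaussSum' p E χ = ∑ t : F, φ t * S t := by
    rw [gaussSum', ← Finset.sum_fiberwise univ T (fun x => χ x * stdAddChar p E x)]
    refine Finset.sum_congr rfl fun t _ => ?_
    rw [hS]
    simp only
    rw [Finset.mul_sum]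
    refine Finset.sum_congr rfl fun x hx => ?_
    have hxt : T x = t := (Finset.mem_filter.mp hx).2
    have hstd : stdAddChar p E x = φ t := by
      rw [stdAddChar, hφ]
      simp only
      have htt : Algebra.trace (ZMod p) E x = Algebra.trace (ZMod p) F t := by
        rw [← hxt, hT]
        exact (Algebra.trace_trace (R := ZMod p) (S := F) x).symm
      rw [htt]
    rw [hstd]; ring
  -- S t = S 1 for t ≠ 0
  have hS1 : ∀ t : F, t ≠ 0 → S t = S 1 := by
    intro t ht
    have hc : algebraMap F E t ≠ 0 := (map_ne_zero (algebraMap F E)).mpr ht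
    rw [hS]
    simp only
    rw [Finset.sum_filter, Finset.sum_filter]
    refine (Fintype.sum_equiv (Equiv.mulLeft₀ (algebraMap F E t) hc)
      _ _ fun x => ?_).symm
    have he : (Equiv.mulLeft₀ (algebraMap F E t) hc) x = algebraMap F E t * x := rfl
    have h1 : T (algebraMap F E t * x) = t * T x := by
      rw [hT]
      simp only
      rw [← Algebra.smul_def, map_smul, smul_eq_mul]
    have h2 : χ (algebraMap F E t * x) = χ x := by
      rw [map_mul, hχF t ht, one_mul]
    rw [he, h1, h2]
    by_cases hx : T x = 1
    · simp [hx]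
    · have : t * T x ≠ t := by
        intro hcon
        exact hx (by field_simp at hcon; exact hcon)
      simp [hx, this]
  -- sum of S over all fibers vanishes
  have hsum0 : ∑ t : F, S t = 0 := by
    rw [hS]
    simp only
    rw [Finset.sum_fiberwise univ T (fun x => χ x)]
    exact MulChar.sum_eq_zero_of_ne_one hχ
  -- φ is additive-multiplicative
  have hφadd : ∀ s t : F, φ (s + t) = φ s * φ t := by
    intro s t
    rw [hφ]
    simp only [map_add]
    rw [← Complex.exp_add, ZMod.val_add, exp_mod_aux p hpC]
    congr 1
    push_cast
    field_simp
  have hφ0 : φ 0 = 1 := by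
    rw [hφ]
    simp [ZMod.val_zero]
  -- φ is nontrivial
  have hnt : ∃ a : F, φ a ≠ 1 := by
    have h := Algebra.trace_ne_zero (ZMod p) F
    obtain ⟨b, hb⟩ := DFunLike.ne_iff.mp h
    have hb' : Algebra.trace (ZMod p) F b ≠ 0 := by simpa using hb
    refine ⟨b, ?_⟩
    rw [hφ]
    simp only
    set v := (Algebra.trace (ZMod p) F b).val with hv
    have hvpos : 0 < v := by
      rcases Nat.eq_zero_or_pos v with h0 | h0
      · exact absurd ((ZMod.val_eq_zero _).mp h0) hb'
      · exact h0
    have hvlt : v < p := ZMod.val_lt _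
    intro hcon
    obtain ⟨n, hn⟩ := Complex.exp_eq_one_iff.mp hcon
    have h2pi : (2 * (Real.pi : ℂ) * Complex.I) ≠ 0 := by
      simp [Real.pi_ne_zero, Complex.I_ne_zero]
    have hnv : (v : ℂ) = n * p := by
      field_simp at hn
      refine mul_left_cancel₀ h2pi ?_
      linear_combination (2 * (Real.pi : ℂ) * Complex.I) * hn
    have hnvZ : (v : ℤ) = n * p := by exact_mod_cast hnv
    have hpv : (p : ℤ) ∣ (v : ℤ) := ⟨n, by linarith⟩
    have := Int.le_of_dvd (by exact_mod_cast hvpos) hpv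
    omega
  -- sum of φ vanishes
  have hφsum : ∑ t : F, φ t = 0 := by
    obtain ⟨a, ha⟩ := hnt
    have key : φ a * ∑ t : F, φ t = ∑ t : F, φ t := by
      rw [Finset.mul_sum]
      calc ∑ t : F, φ a * φ t = ∑ t : F, φ (a + t) := by
            refine Finset.sum_congr rfl fun t _ => (hφadd a t).symm
        _ = ∑ t : F, φ t := Fintype.sum_equiv (Equiv.addLeft a) _ _ fun t => rfl
    have hz : (φ a - 1) * ∑ t : F, φ t = 0 := by linear_combination key
    rcases mul_eq_zero.mp hz with h | h
    · exact absurd (by linear_combination h : φ a = 1) ha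
    · exact h
  -- split sums at 0
  have hsplit : ∀ f : F → ℂ, ∑ t : F, f t = f 0 + ∑ t ∈ univ.erase 0, f t := by
    intro f
    exact (Finset.add_sum_erase univ f (mem_univ 0)).symm
  have hcard_erase : (((univ : Finset F).erase 0).card : ℂ) = (q : ℂ) - 1 := by
    rw [Finset.card_erase_of_mem (mem_univ 0), Finset.card_univ, ← hq]
    push_cast [Nat.cast_sub (by omega : 1 ≤ q)]
    ring
  have h1 : S 0 + ((q : ℂ) - 1) * S 1 = 0 := by
    rw [← hsum0, hsplit S]
    have : ∑ t ∈ univ.erase 0, S t = ((q : ℂ) - 1) * S 1 := by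
      rw [Finset.sum_congr rfl (fun t ht => hS1 t (Finset.ne_of_mem_erase ht)),
        Finset.sum_const, nsmul_eq_mul, hcard_erase]
    rw [this]
  have hφe : ∑ t ∈ univ.erase 0, φ t = -1 := by
    have := hsplit φ
    rw [hφsum, hφ0] at this
    linear_combination -this
  have h2 : gaussSum' p E χ = S 0 - S 1 := by
    rw [hG, hsplit (fun t => φ t * S t)]
    simp only [hφ0, one_mul]
    have : ∑ t ∈ univ.erase 0, φ t * S t = (∑ t ∈ univ.erase 0, φ t) * S 1 := by
      rw [Finset.sum_mul]
      exact Finset.sum_congr rfl fun t ht => by rw [hS1 t (Finset.ne_of_mem_erase ht)]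
    rw [this, hφe]
    ring
  -- the filtered sum in the goal equals S 0
  have hS0 : ∑ x ∈ univ.filter (fun x : E => x ≠ 0 ∧ Algebra.trace F E x = 0), χ x = S 0 := by
    rw [hS]
    simp only
    refine Finset.sum_subset ?_ ?_
    · intro x hx
      simp only [Finset.mem_filter, Finset.mem_univ, true_and] at hx ⊢
      exact hx.2
    · intro x hx hx'
      simp only [Finset.mem_filter, Finset.mem_univ, true_and] at hx hx'
      have hx0 : x = 0 := by
        by_contra h
        exact hx' ⟨h, hx⟩
      rw [hx0]
      exact MulChar.map_nonunit χ (by simp)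
  rw [hS0, h2]
  field_simp
  linear_combination h1
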